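/- arXiv:2407.02369 — 10 statements merged into one kernel-verified Lean document; each statement's English description precedes it below -/
import Mathlib

section
/- The Q-Bellman operator H is a contraction with respect to the maximum norm with contraction factor β; that is, for all Q, Q' : S × A → ℝ, it holds that max_{(i,a)} |(HQ)(i,a) − (HQ')(i,a)| ≤ β · max_{(i,a)} |Q(i,a) − Q'(i,a)|. -/
open Finset Real

variable {S A : Type*}

/-- Maximum norm `‖Q‖ = max_{(i,a)} |Q(i,a)|`. -/
noncomputable def maxNorm [Fintype S] [Fintype A] [Nonempty S] [Nonempty A]
    (Q : S × A → ℝ) : ℝ :=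
  Finset.univ.sup' Finset.univ_nonempty fun x => |Q x|

/-- Q-Bellman operator `(HQ)(i,a) = c(i,a) + β ∑_j p(j|i,a) max_b Q(j,b)`. -/
noncomputable def bellmanH [Fintype S] [Fintype A] [Nonempty A]
    (p c : S → A → S → ℝ) (β : ℝ) (Q : S × A → ℝ) : S × A → ℝ :=
  fun x => (∑ j, p x.1 x.2 j * c x.1 x.2 j) +
    β * ∑ j, p x.1 x.2 j * (Finset.univ.sup' Finset.univ_nonempty fun b => Q (j, b))

lemma sup'_le_sup'_add_sup'_abs {ι : Type*} (s : Finset ι) (hs : s.Nonempty)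
    (f g : ι → ℝ) :
    s.sup' hs f ≤ s.sup' hs g + s.sup' hs (fun b => |f b - g b|) := by
  apply Finset.sup'_le
  intro b hb
  have h1 : g b ≤ s.sup' hs g := Finset.le_sup' g hb
  have h2 : |f b - g b| ≤ s.sup' hs (fun b => |f b - g b|) :=
    Finset.le_sup' (fun b => |f b - g b|) hb
  have := abs_sub_abs_le_abs_sub (f b) (g b)
  nlinarith [le_abs_self (f b - g b), abs_nonneg (f b - g b)]

lemma abs_sup'_sub_sup'_le {ι : Type*} (s : Finset ι) (hs : s.Nonempty)
    (f g : ι → ℝ) :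
    |s.sup' hs f - s.sup' hs g| ≤ s.sup' hs (fun b => |f b - g b|) := by
  rw [abs_sub_le_iff]
  constructor
  · linarith [sup'_le_sup'_add_sup'_abs s hs f g]
  · have := sup'_le_sup'_add_sup'_abs s hs g f
    simp only [abs_sub_comm] at this
    linarith

/-- The Q-Bellman operator is a `β`-contraction in the maximum norm. -/
theorem bellmanH_contraction [Fintype S] [Fintype A] [Nonempty S] [Nonempty A]
    (p c : S → A → S → ℝ)
    (hp0 : ∀ i a j, 0 ≤ p i a j) (hp1 : ∀ i a, ∑ j, p i a j = 1)
    (β : ℝ) (hβ0 : 0 ≤ β) (hβ1 : β < 1) (Q Q' : S × A → ℝ) :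
    maxNorm (fun x => bellmanH p c β Q x - bellmanH p c β Q' x) ≤
      β * maxNorm (fun x => Q x - Q' x) := by
  set M := maxNorm (fun x => Q x - Q' x) with hM
  apply Finset.sup'_le
  intro x _
  have key : ∀ j, |(Finset.univ.sup' Finset.univ_nonempty fun b => Q (j, b)) -
      (Finset.univ.sup' Finset.univ_nonempty fun b => Q' (j, b))| ≤ M := by
    intro j
    refine (abs_sup'_sub_sup'_le _ _ _ _).trans ?_
    apply Finset.sup'_le
    intro b _
    exact Finset.le_sup' (f := fun x => |Q x - Q' x|) (Finset.mem_univ (j, b))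
  simp only [bellmanH]
  have heq : (∑ j, p x.1 x.2 j * c x.1 x.2 j) +
      β * (∑ j, p x.1 x.2 j * (Finset.univ.sup' Finset.univ_nonempty fun b => Q (j, b))) -
      ((∑ j, p x.1 x.2 j * c x.1 x.2 j) +
      β * (∑ j, p x.1 x.2 j * (Finset.univ.sup' Finset.univ_nonempty fun b => Q' (j, b)))) =
      β * ∑ j, p x.1 x.2 j * ((Finset.univ.sup' Finset.univ_nonempty fun b => Q (j, b)) -
        (Finset.univ.sup' Finset.univ_nonempty fun b => Q' (j, b))) := by
    rw [Finset.sum_congr rfl (fun j _ => mul_sub (p x.1 x.2 j) _ _), Finset.sum_sub_distrib]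
    ring
  rw [heq, abs_mul, abs_of_nonneg hβ0]
  apply mul_le_mul_of_nonneg_left _ hβ0
  calc |∑ j, p x.1 x.2 j * _| ≤ ∑ j, |p x.1 x.2 j * _| := Finset.abs_sum_le_sum_abs _ _
    _ ≤ ∑ j, p x.1 x.2 j * M := by
        apply Finset.sum_le_sum
        intro j _
        rw [abs_mul, abs_of_nonneg (hp0 _ _ _)]
        exact mul_le_mul_of_nonneg_left (key j) (hp0 _ _ _)
    _ = M := by rw [← Finset.sum_mul, hp1, one_mul]
end

section
/- The smooth Q-Bellman operator U is a contraction with respect to the maximum norm with contraction factor β; that is, for all Q, Q' : S × A → ℝ, it holds that max_{(i,a)} |(UQ)(i,a) − (UQ')(i,a)| ≤ β · max_{(i,a)} |Q(i,a) − Q'(i,a)|. -/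
open Finset Real

variable {S A : Type*}

/-- Smooth Q-Bellman operator
`(UQ)(i,a) = c(i,a) + β ∑_j p(j|i,a) (1/N) log ∑_b e^{N Q(j,b)}`. -/
noncomputable def smoothBellmanU [Fintype S] [Fintype A] [Nonempty A]
    (p c : S → A → S → ℝ) (β N : ℝ) (Q : S × A → ℝ) : S × A → ℝ :=
  fun x => (∑ j, p x.1 x.2 j * c x.1 x.2 j) +
    β * ∑ j, p x.1 x.2 j * ((1 / N) * Real.log (∑ b, Real.exp (N * Q (j, b))))

/-- One-sided log-sum-exp bound. -/
lemma lse_le [Fintype A] [Nonempty A] (N : ℝ) (hN : 0 < N) (f g : A → ℝ) (M : ℝ)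
    (hfg : ∀ b, f b ≤ g b + M) :
    (1 / N) * Real.log (∑ b, Real.exp (N * f b)) ≤
      (1 / N) * Real.log (∑ b, Real.exp (N * g b)) + M := by
  have hpos : 0 < ∑ b, Real.exp (N * g b) :=
    Finset.sum_pos (fun b _ => Real.exp_pos _) Finset.univ_nonempty
  have hle : (∑ b, Real.exp (N * f b)) ≤ Real.exp (N * M) * ∑ b, Real.exp (N * g b) := by
    rw [Finset.mul_sum]
    refine Finset.sum_le_sum fun b _ => ?_
    rw [← Real.exp_add]
    exact Real.exp_le_exp.mpr (by nlinarith [hfg b])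
  have hlog : Real.log (∑ b, Real.exp (N * f b)) ≤ N * M + Real.log (∑ b, Real.exp (N * g b)) := by
    calc Real.log (∑ b, Real.exp (N * f b))
        ≤ Real.log (Real.exp (N * M) * ∑ b, Real.exp (N * g b)) :=
          Real.log_le_log (Finset.sum_pos (fun b _ => Real.exp_pos _) Finset.univ_nonempty) hle
      _ = N * M + Real.log (∑ b, Real.exp (N * g b)) := by
          rw [Real.log_mul (Real.exp_ne_zero _) (ne_of_gt hpos), Real.log_exp]
  have h1N : 0 < 1 / N := by positivity
  have := mul_le_mul_of_nonneg_left hlog (le_of_lt h1N)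
  calc (1 / N) * Real.log (∑ b, Real.exp (N * f b))
      ≤ (1 / N) * (N * M + Real.log (∑ b, Real.exp (N * g b))) := this
    _ = (1 / N) * Real.log (∑ b, Real.exp (N * g b)) + M := by
        field_simp; ring

/-- The smooth Q-Bellman operator is a `β`-contraction in the maximum norm. -/
theorem smoothBellmanU_contraction [Fintype S] [Fintype A] [Nonempty S] [Nonempty A]
    (p c : S → A → S → ℝ)
    (hp0 : ∀ i a j, 0 ≤ p i a j) (hp1 : ∀ i a, ∑ j, p i a j = 1)
    (β : ℝ) (hβ0 : 0 ≤ β) (hβ1 : β < 1)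
    (N : ℝ) (hN : 0 < N) (Q Q' : S × A → ℝ) :
    maxNorm (fun x => smoothBellmanU p c β N Q x - smoothBellmanU p c β N Q' x) ≤
      β * maxNorm (fun x => Q x - Q' x) := by
  set M := maxNorm (fun x => Q x - Q' x) with hM
  have hMle : ∀ x : S × A, |Q x - Q' x| ≤ M := fun x =>
    Finset.le_sup' (f := fun x => |Q x - Q' x|) (Finset.mem_univ x)
  set L : (S × A → ℝ) → S → ℝ := fun R j =>
    (1 / N) * Real.log (∑ b, Real.exp (N * R (j, b))) with hL
  have hLabs : ∀ j, |L Q j - L Q' j| ≤ M := by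
    intro j
    rw [abs_sub_le_iff]
    constructor
    · have h := lse_le N hN (fun b => Q (j, b)) (fun b => Q' (j, b)) M
        (fun b => by have := (abs_le.mp (hMle (j, b))).2; linarith)
      beta_reduce at h
      simp only [hL]
      linarith
    · have h := lse_le N hN (fun b => Q' (j, b)) (fun b => Q (j, b)) M
        (fun b => by have := (abs_le.mp (hMle (j, b))).1; linarith)
      beta_reduce at h
      simp only [hL]
      linarith
  apply Finset.sup'_le
  intro x _
  have hdiff : smoothBellmanU p c β N Q x - smoothBellmanU p c β N Q' x =
      β * ∑ j, p x.1 x.2 j * (L Q j - L Q' j) := by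
    simp only [smoothBellmanU, hL]
    rw [add_sub_add_left_eq_sub, ← mul_sub, ← Finset.sum_sub_distrib]
    congr 1
    refine Finset.sum_congr rfl fun j _ => ?_
    ring
  beta_reduce
  rw [hdiff, abs_mul, abs_of_nonneg hβ0]
  refine mul_le_mul_of_nonneg_left ?_ hβ0
  calc |∑ j, p x.1 x.2 j * (L Q j - L Q' j)|
      ≤ ∑ j, |p x.1 x.2 j * (L Q j - L Q' j)| := Finset.abs_sum_le_sum_abs _ _
    _ ≤ ∑ j, p x.1 x.2 j * M := by
        refine Finset.sum_le_sum fun j _ => ?_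
        rw [abs_mul, abs_of_nonneg (hp0 x.1 x.2 j)]
        exact mul_le_mul_of_nonneg_left (hLabs j) (hp0 x.1 x.2 j)
    _ = M := by rw [← Finset.sum_mul, hp1, one_mul]
end

section
/- Suppose Q̂ : S × A → ℝ is a fixed point of the smooth Q-Bellman operator U and Q̃ : S × A → ℝ is a fixed point of the Q-Bellman operator H. Then ‖Q̂ − Q̃‖ ≤ (β / (N(1 − β))) · log|A|, where ‖·‖ is the maximum norm. -/
open Finset Real

variable {S A : Type*}

lemma lse_lower' [Fintype A] [Nonempty A] (N : ℝ) (hN : 0 < N) (g : A → ℝ) :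
    Finset.univ.sup' Finset.univ_nonempty g ≤
      (1 / N) * Real.log (∑ b, Real.exp (N * g b)) := by
  have hpos : (0:ℝ) < ∑ b, Real.exp (N * g b) :=
    Finset.sum_pos (fun b _ => Real.exp_pos _) Finset.univ_nonempty
  obtain ⟨b0, -, hb0⟩ := Finset.exists_mem_eq_sup' (Finset.univ_nonempty (α := A)) g
  have h1 : Real.exp (N * g b0) ≤ ∑ b, Real.exp (N * g b) :=
    Finset.single_le_sum (f := fun b => Real.exp (N * g b))
      (fun b _ => (Real.exp_pos _).le) (Finset.mem_univ b0)
  have h2 : N * g b0 ≤ Real.log (∑ b, Real.exp (N * g b)) :=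
    (Real.le_log_iff_exp_le hpos).mpr h1
  rw [hb0]
  calc g b0 = (1/N) * (N * g b0) := by field_simp
    _ ≤ (1/N) * Real.log (∑ b, Real.exp (N * g b)) :=
        mul_le_mul_of_nonneg_left h2 (by positivity)

lemma lse_upper' [Fintype A] [Nonempty A] (N : ℝ) (hN : 0 < N) (g : A → ℝ) :
    (1 / N) * Real.log (∑ b, Real.exp (N * g b)) ≤
      Finset.univ.sup' Finset.univ_nonempty g + (1 / N) * Real.log (Fintype.card A) := by
  have hpos : (0:ℝ) < ∑ b, Real.exp (N * g b) :=
    Finset.sum_pos (fun b _ => Real.exp_pos _) Finset.univ_nonempty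
  set m := Finset.univ.sup' Finset.univ_nonempty g with hm
  have hcard : (0:ℝ) < (Fintype.card A : ℝ) := by exact_mod_cast Fintype.card_pos
  have h1 : ∑ b, Real.exp (N * g b) ≤ (Fintype.card A : ℝ) * Real.exp (N * m) := by
    calc ∑ b, Real.exp (N * g b) ≤ ∑ _b : A, Real.exp (N * m) := by
          apply Finset.sum_le_sum
          intro b _
          exact Real.exp_le_exp.mpr (mul_le_mul_of_nonneg_left
            (Finset.le_sup' g (Finset.mem_univ b)) hN.le)
      _ = (Fintype.card A : ℝ) * Real.exp (N * m) := by
          simp [Finset.sum_const, nsmul_eq_mul, Finset.card_univ]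
  have h2 : Real.log (∑ b, Real.exp (N * g b)) ≤ Real.log (Fintype.card A) + N * m := by
    calc Real.log (∑ b, Real.exp (N * g b))
        ≤ Real.log ((Fintype.card A : ℝ) * Real.exp (N * m)) := Real.log_le_log hpos h1
      _ = Real.log (Fintype.card A) + N * m := by
          rw [Real.log_mul (ne_of_gt hcard) (Real.exp_ne_zero _), Real.log_exp]
  calc (1/N) * Real.log (∑ b, Real.exp (N * g b))
      ≤ (1/N) * (Real.log (Fintype.card A) + N * m) :=
        mul_le_mul_of_nonneg_left h2 (by positivity)
    _ = m + (1/N) * Real.log (Fintype.card A) := by field_simp; ring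

lemma sup'_abs_sub' [Fintype S] [Fintype A] [Nonempty S] [Nonempty A]
    (Q1 Q2 : S × A → ℝ) (j : S) :
    |(Finset.univ.sup' Finset.univ_nonempty fun b => Q1 (j,b)) -
     (Finset.univ.sup' Finset.univ_nonempty fun b => Q2 (j,b))| ≤
      maxNorm (fun x => Q1 x - Q2 x) := by
  rw [abs_sub_le_iff]
  constructor
  · rw [sub_le_iff_le_add]
    apply Finset.sup'_le
    intro b _
    have h1 : |Q1 (j,b) - Q2 (j,b)| ≤ maxNorm (fun x => Q1 x - Q2 x) :=
      Finset.le_sup' (fun x : S × A => |Q1 x - Q2 x|) (Finset.mem_univ (j,b))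
    have h2 : Q2 (j,b) ≤ Finset.univ.sup' Finset.univ_nonempty fun b => Q2 (j,b) :=
      Finset.le_sup' (fun b => Q2 (j,b)) (Finset.mem_univ b)
    have := le_abs_self (Q1 (j,b) - Q2 (j,b))
    linarith
  · rw [sub_le_iff_le_add]
    apply Finset.sup'_le
    intro b _
    have h1 : |Q1 (j,b) - Q2 (j,b)| ≤ maxNorm (fun x => Q1 x - Q2 x) :=
      Finset.le_sup' (fun x : S × A => |Q1 x - Q2 x|) (Finset.mem_univ (j,b))
    have h2 : Q1 (j,b) ≤ Finset.univ.sup' Finset.univ_nonempty fun b => Q1 (j,b) :=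
      Finset.le_sup' (fun b => Q1 (j,b)) (Finset.mem_univ b)
    have := neg_abs_le (Q1 (j,b) - Q2 (j,b))
    linarith


/-- If `Q̂` is the fixed point of `U` and `Q̃` the fixed point of `H`, then
`‖Q̂ − Q̃‖ ≤ (β / (N(1 − β))) log|A|`. -/
theorem smooth_fixedPoint_close [Fintype S] [Fintype A] [Nonempty S] [Nonempty A]
    (p c : S → A → S → ℝ)
    (hp0 : ∀ i a j, 0 ≤ p i a j) (hp1 : ∀ i a, ∑ j, p i a j = 1)
    (β : ℝ) (hβ0 : 0 ≤ β) (hβ1 : β < 1)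
    (N : ℝ) (hN : 0 < N)
    (Qhat Qtilde : S × A → ℝ)
    (hQhat : smoothBellmanU p c β N Qhat = Qhat)
    (hQtilde : bellmanH p c β Qtilde = Qtilde) :
    maxNorm (fun x => Qhat x - Qtilde x) ≤
      β / (N * (1 - β)) * Real.log (Fintype.card A) := by
  set M := maxNorm (fun x => Qhat x - Qtilde x) with hM
  have hlogA : (0:ℝ) ≤ Real.log (Fintype.card A) :=
    Real.log_nonneg (by exact_mod_cast Fintype.card_pos)
  have hK : (0:ℝ) ≤ (1/N) * Real.log (Fintype.card A) := by positivity
  have key : ∀ x : S × A, |Qhat x - Qtilde x| ≤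
      β * ((1/N) * Real.log (Fintype.card A) + M) := by
    intro x
    have hdiff : Qhat x - Qtilde x = β * ∑ j, p x.1 x.2 j *
        ((1/N) * Real.log (∑ b, Real.exp (N * Qhat (j,b))) -
         Finset.univ.sup' Finset.univ_nonempty (fun b => Qtilde (j,b))) := by
      conv_lhs => rw [← hQhat, ← hQtilde]
      simp only [smoothBellmanU, bellmanH, mul_sub]
      rw [Finset.sum_sub_distrib]
      ring
    rw [hdiff, abs_mul, abs_of_nonneg hβ0]
    apply mul_le_mul_of_nonneg_left _ hβ0
    calc |∑ j, p x.1 x.2 j *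
        ((1/N) * Real.log (∑ b, Real.exp (N * Qhat (j,b))) -
         Finset.univ.sup' Finset.univ_nonempty (fun b => Qtilde (j,b)))|
        ≤ ∑ j, |p x.1 x.2 j *
            ((1/N) * Real.log (∑ b, Real.exp (N * Qhat (j,b))) -
             Finset.univ.sup' Finset.univ_nonempty (fun b => Qtilde (j,b)))| :=
          Finset.abs_sum_le_sum_abs _ _
      _ ≤ ∑ j, p x.1 x.2 j * ((1/N) * Real.log (Fintype.card A) + M) := by
          apply Finset.sum_le_sum
          intro j _
          rw [abs_mul, abs_of_nonneg (hp0 x.1 x.2 j)]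
          apply mul_le_mul_of_nonneg_left _ (hp0 x.1 x.2 j)
          have ha := lse_lower' N hN (fun b => Qhat (j,b))
          have hb := lse_upper' N hN (fun b => Qhat (j,b))
          have hc := sup'_abs_sub' Qhat Qtilde j
          obtain ⟨hc1, hc2⟩ := abs_le.mp hc
          rw [abs_le]
          constructor <;> simp only [hM] at * <;> linarith
      _ = (1/N) * Real.log (Fintype.card A) + M := by
          rw [← Finset.sum_mul, hp1, one_mul]
  have hMle : M ≤ β * ((1/N) * Real.log (Fintype.card A) + M) := by
    rw [hM, maxNorm]
    exact Finset.sup'_le _ _ fun x _ => key x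
  have h1β : (0:ℝ) < 1 - β := by linarith
  rw [div_mul_eq_mul_div, le_div_iff₀ (by positivity)]
  have h := mul_le_mul_of_nonneg_left hMle hN.le
  have h2 : N * (β * (1/N * Real.log (Fintype.card A) + M)) =
      β * Real.log (Fintype.card A) + N * β * M := by field_simp
  rw [h2] at h
  nlinarith
end

section
/- Suppose ‖Q_0‖ ≤ C_max/(1 − β). Then after one two-step Q-learning update, for every (i,a) ∈ S × A, |Q_1(i,a)| ≤ (C_max/(1 − β))(1 + β|θ_0|); consequently ‖Q_1‖ ≤ (C_max/(1 − β))(1 + β|θ_0|). -/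
open Finset Real

variable {S A : Type*}

/-- One two-step Q-learning (TSQL) update: the selected pair `sa` is updated using
rewards `c'`, `c''`, next states `j`, `k`, step size `α` and parameter `θ`;
all other entries stay unchanged. -/
noncomputable def tsqlUpdate [Fintype A] [Nonempty A] [DecidableEq S] [DecidableEq A]
    (β : ℝ) (Q : S × A → ℝ) (sa : S × A) (j k : S) (c' c'' α θ : ℝ) : S × A → ℝ :=
  fun x => if x = sa then
      (1 - α) * Q sa + α * (c' + β * (Finset.univ.sup' Finset.univ_nonempty fun b => Q (j, b))
        + β * θ * (c'' + β * (Finset.univ.sup' Finset.univ_nonempty fun e => Q (k, e))))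
    else Q x

/-- If `‖Q₀‖ ≤ C_max/(1−β)` then after one TSQL update,
`|Q₁(i,a)| ≤ (C_max/(1−β))(1 + β|θ₀|)` for every `(i,a)`, and hence
`‖Q₁‖ ≤ (C_max/(1−β))(1 + β|θ₀|)`. -/
theorem tsql_one_step_bound [Fintype S] [Fintype A] [Nonempty S] [Nonempty A]
    [DecidableEq S] [DecidableEq A]
    (β Cmax : ℝ) (hβ0 : 0 ≤ β) (hβ1 : β < 1) (hC : 0 ≤ Cmax)
    (Q0 : S × A → ℝ) (sa : S × A) (j k : S) (c' c'' α0 θ0 : ℝ)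
    (hc' : |c'| ≤ Cmax) (hc'' : |c''| ≤ Cmax)
    (hα0 : 0 ≤ α0) (hα1 : α0 ≤ 1) (hθ : |θ0| ≤ 1)
    (hQ0 : maxNorm Q0 ≤ Cmax / (1 - β)) :
    (∀ x : S × A, |tsqlUpdate β Q0 sa j k c' c'' α0 θ0 x| ≤
        (Cmax / (1 - β)) * (1 + β * |θ0|)) ∧
    maxNorm (tsqlUpdate β Q0 sa j k c' c'' α0 θ0) ≤
      (Cmax / (1 - β)) * (1 + β * |θ0|) := by
  set M := Cmax / (1 - β) with hMdef
  have hβ' : (0:ℝ) < 1 - β := by linarith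
  have hM0 : 0 ≤ M := div_nonneg hC hβ'.le
  have hCM : Cmax = M * (1 - β) := by rw [hMdef, div_mul_cancel₀ _ hβ'.ne']
  have hQx : ∀ x : S × A, |Q0 x| ≤ M := fun x =>
    le_trans (Finset.le_sup' (fun y => |Q0 y|) (Finset.mem_univ x)) hQ0
  have hsup : ∀ s : S,
      |Finset.univ.sup' Finset.univ_nonempty fun b => Q0 (s, b)| ≤ M := by
    intro s
    rw [abs_le]
    constructor
    · obtain ⟨b⟩ := (inferInstance : Nonempty A)
      exact le_trans (abs_le.1 (hQx (s, b))).1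
        (Finset.le_sup' (fun b => Q0 (s, b)) (Finset.mem_univ b))
    · exact Finset.sup'_le _ _ fun b _ => (abs_le.1 (hQx (s, b))).2
  have hθ0 : 0 ≤ |θ0| := abs_nonneg _
  have key : ∀ x : S × A, |tsqlUpdate β Q0 sa j k c' c'' α0 θ0 x| ≤ M * (1 + β * |θ0|) := by
    intro x
    unfold tsqlUpdate
    split
    · set Sj := Finset.univ.sup' Finset.univ_nonempty fun b => Q0 (j, b) with hSj
      set Sk := Finset.univ.sup' Finset.univ_nonempty fun e => Q0 (k, e) with hSk
      have hj := hsup j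
      have hk := hsup k
      rw [← hSj] at hj
      rw [← hSk] at hk
      have h1 : |c' + β * Sj| ≤ M := by
        calc |c' + β * Sj| ≤ |c'| + |β * Sj| := abs_add_le _ _
          _ ≤ Cmax + β * M := by
              have : |β * Sj| = β * |Sj| := by rw [abs_mul, abs_of_nonneg hβ0]
              rw [this]
              have := mul_le_mul_of_nonneg_left hj hβ0
              linarith
          _ = M := by rw [hCM]; ring
      have h2 : |c'' + β * Sk| ≤ M := by
        calc |c'' + β * Sk| ≤ |c''| + |β * Sk| := abs_add_le _ _
          _ ≤ Cmax + β * M := by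
              have : |β * Sk| = β * |Sk| := by rw [abs_mul, abs_of_nonneg hβ0]
              rw [this]
              have := mul_le_mul_of_nonneg_left hk hβ0
              linarith
          _ = M := by rw [hCM]; ring
      have h3 : |β * θ0 * (c'' + β * Sk)| ≤ β * |θ0| * M := by
        rw [abs_mul, abs_mul, abs_of_nonneg hβ0]
        exact mul_le_mul_of_nonneg_left h2 (by positivity)
      have h4 : |c' + β * Sj + β * θ0 * (c'' + β * Sk)| ≤ M + β * |θ0| * M :=
        le_trans (abs_add_le _ _) (by linarith)
      have h5 : |(1 - α0) * Q0 sa| ≤ (1 - α0) * M := by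
        rw [abs_mul, abs_of_nonneg (by linarith : (0:ℝ) ≤ 1 - α0)]
        exact mul_le_mul_of_nonneg_left (hQx sa) (by linarith)
      calc |(1 - α0) * Q0 sa + α0 * (c' + β * Sj + β * θ0 * (c'' + β * Sk))|
          ≤ |(1 - α0) * Q0 sa| + |α0 * (c' + β * Sj + β * θ0 * (c'' + β * Sk))| := abs_add_le _ _
        _ ≤ (1 - α0) * M + α0 * (M + β * |θ0| * M) := by
            have : |α0 * (c' + β * Sj + β * θ0 * (c'' + β * Sk))|
                = α0 * |c' + β * Sj + β * θ0 * (c'' + β * Sk)| := by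
              rw [abs_mul, abs_of_nonneg hα0]
            rw [this]
            have := mul_le_mul_of_nonneg_left h4 hα0
            linarith
        _ ≤ M * (1 + β * |θ0|) := by nlinarith [mul_nonneg (mul_nonneg hβ0 hθ0) hM0]
    · calc |Q0 x| ≤ M := hQx x
        _ ≤ M * (1 + β * |θ0|) := by nlinarith [mul_nonneg hβ0 hθ0]
  exact ⟨key, Finset.sup'_le _ _ fun x _ => key x⟩
end

section
/- Let L ≥ (C_max/(1 − β))(1 + β|θ_0|) and suppose ‖Q_n‖ ≤ L. Then the Q-function Q_{n+1} obtained from one two-step Q-learning update with step size α_n ∈ [0,1] and parameter θ_n with |θ_n| ≤ |θ_0| satisfies ‖Q_{n+1}‖ ≤ L (1 + α_n β² |θ_n|). -/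
open Finset Real

variable {S A : Type*}

/-- If `L ≥ (C_max/(1−β))(1 + β|θ₀|)` and `‖Qₙ‖ ≤ L`, then one TSQL update gives
`‖Qₙ₊₁‖ ≤ L (1 + αₙ β² |θₙ|)`. -/
theorem tsql_inductive_step_bound [Fintype S] [Fintype A] [Nonempty S] [Nonempty A]
    [DecidableEq S] [DecidableEq A]
    (β Cmax : ℝ) (hβ0 : 0 ≤ β) (hβ1 : β < 1) (hC : 0 ≤ Cmax)
    (Qn : S × A → ℝ) (sa : S × A) (j k : S) (c' c'' αn θn θ0 : ℝ)
    (hc' : |c'| ≤ Cmax) (hc'' : |c''| ≤ Cmax)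
    (hα0 : 0 ≤ αn) (hα1 : αn ≤ 1) (hθ1 : |θn| ≤ 1) (hθ : |θn| ≤ |θ0|)
    (L : ℝ) (hL : (Cmax / (1 - β)) * (1 + β * |θ0|) ≤ L)
    (hQn : maxNorm Qn ≤ L) :
    maxNorm (tsqlUpdate β Qn sa j k c' c'' αn θn) ≤ L * (1 + αn * β ^ 2 * |θn|) := by
  have hall : ∀ x : S × A, |Qn x| ≤ L := fun x =>
    le_trans (Finset.le_sup' (fun x => |Qn x|) (Finset.mem_univ x)) hQn
  have hL0 : 0 ≤ L := le_trans (abs_nonneg _) (hall (Classical.arbitrary _))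
  have hsup : ∀ (s : S), |Finset.univ.sup' Finset.univ_nonempty fun b => Qn (s, b)| ≤ L := by
    intro s
    rw [abs_le]
    constructor
    · refine le_trans ?_ (Finset.le_sup' (fun b => Qn (s, b)) (Finset.mem_univ (Classical.arbitrary A)))
      have := hall (s, Classical.arbitrary A)
      rw [abs_le] at this; exact this.1
    · refine Finset.sup'_le _ _ fun b _ => ?_
      have := hall (s, b)
      rw [abs_le] at this; exact this.2
  -- key inequality: Cmax * (1 + β * |θn|) ≤ (1 - β) * L
  have hkey : Cmax * (1 + β * |θn|) ≤ (1 - β) * L := by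
    have h1β : 0 < 1 - β := by linarith
    have h2 : Cmax * (1 + β * |θ0|) ≤ (1 - β) * L := by
      have := (div_le_iff₀ h1β).mp ((div_mul_eq_mul_div Cmax (1 - β) _).symm ▸ hL)
      linarith [this]
    have : Cmax * (1 + β * |θn|) ≤ Cmax * (1 + β * |θ0|) := by
      apply mul_le_mul_of_nonneg_left _ hC
      have := mul_le_mul_of_nonneg_left hθ hβ0
      linarith
    linarith
  apply Finset.sup'_le
  intro x _
  by_cases hx : x = sa
  · simp only [tsqlUpdate, hx, if_pos rfl]
    have hj := hsup j
    have hk := hsup k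
    have hQsa := hall sa
    have habs : |(1 - αn) * Qn sa + αn * (c' + β * (Finset.univ.sup' Finset.univ_nonempty fun b => Qn (j, b))
        + β * θn * (c'' + β * (Finset.univ.sup' Finset.univ_nonempty fun e => Qn (k, e))))| ≤
        (1 - αn) * L + αn * (Cmax + β * L + β * |θn| * (Cmax + β * L)) := by
      refine le_trans (abs_add_le _ _) ?_
      gcongr
      · rw [abs_mul, abs_of_nonneg (by linarith : (0:ℝ) ≤ 1 - αn)]
        exact mul_le_mul_of_nonneg_left hQsa (by linarith)
      · rw [abs_mul, abs_of_nonneg hα0]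
        apply mul_le_mul_of_nonneg_left _ hα0
        refine le_trans (abs_add_le _ _) ?_
        have h1 : |c' + β * (Finset.univ.sup' Finset.univ_nonempty fun b => Qn (j, b))| ≤
            Cmax + β * L := by
          refine le_trans (abs_add_le _ _) ?_
          rw [abs_mul, abs_of_nonneg hβ0]
          gcongr
        have h2 : |β * θn * (c'' + β * (Finset.univ.sup' Finset.univ_nonempty fun e => Qn (k, e)))| ≤
            β * |θn| * (Cmax + β * L) := by
          rw [abs_mul, abs_mul, abs_of_nonneg hβ0]
          refine mul_le_mul_of_nonneg_left ?_ (by positivity)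
          refine le_trans (abs_add_le _ _) ?_
          rw [abs_mul, abs_of_nonneg hβ0]
          gcongr
        linarith
    refine le_trans habs ?_
    have hθpos : 0 ≤ |θn| := abs_nonneg _
    nlinarith [mul_le_mul_of_nonneg_left hkey hα0]
  · simp only [tsqlUpdate, if_neg hx]
    refine le_trans (hall x) ?_
    have : 0 ≤ L * (αn * β ^ 2 * |θn|) := by positivity
    linarith
end

section
/- Suppose ‖Q_0‖ ≤ C_max/(1 − β) and the parameter sequence satisfies |θ_n| ≤ 1 for all n and |θ_n| is monotonically nonincreasing. Then the iterates of two-step Q-learning satisfy, for every n ≥ 1, ‖Q_n‖ ≤ (C_max/(1 − β))(1 + β|θ_0|) · ∏_{i=1}^{n−1} (1 + α_i β² |θ_i|). -/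
open Finset Real

variable {S A : Type*}

private lemma abs_entry_le_maxNorm [Fintype S] [Fintype A] [Nonempty S] [Nonempty A]
    (Q : S × A → ℝ) (x : S × A) :
    |Q x| ≤ Finset.univ.sup' Finset.univ_nonempty fun y => |Q y| :=
  Finset.le_sup' (fun y => |Q y|) (Finset.mem_univ x)

private lemma abs_sup_le [Fintype S] [Fintype A] [Nonempty S] [Nonempty A]
    (Q : S × A → ℝ) (s : S) (B : ℝ)
    (h : (Finset.univ.sup' Finset.univ_nonempty fun y => |Q y|) ≤ B) :
    |Finset.univ.sup' Finset.univ_nonempty fun b => Q (s, b)| ≤ B := by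
  have hB : ∀ b : A, |Q (s, b)| ≤ B := fun b => le_trans (abs_entry_le_maxNorm Q (s, b)) h
  rw [abs_le]
  constructor
  · obtain ⟨b⟩ := (inferInstance : Nonempty A)
    exact le_trans (abs_le.1 (hB b)).1 (Finset.le_sup' (fun b => Q (s, b)) (Finset.mem_univ b))
  · exact Finset.sup'_le _ _ fun b _ => (abs_le.1 (hB b)).2

private lemma tsql_step_bound [Fintype S] [Fintype A] [Nonempty S] [Nonempty A]
    [DecidableEq S] [DecidableEq A]
    (β Cmax B T : ℝ) (Q : S × A → ℝ) (sa : S × A) (j k : S) (c' c'' α θ : ℝ)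
    (hβ0 : 0 ≤ β) (hc' : |c'| ≤ Cmax) (hc'' : |c''| ≤ Cmax)
    (hα0 : 0 ≤ α) (hα1 : α ≤ 1)
    (hQ : (Finset.univ.sup' Finset.univ_nonempty fun y => |Q y|) ≤ B)
    (hBT : B ≤ T)
    (hT : (1 - α) * B + α * ((Cmax + β * B) * (1 + β * |θ|)) ≤ T) :
    (Finset.univ.sup' Finset.univ_nonempty
      fun y => |tsqlUpdate β Q sa j k c' c'' α θ y|) ≤ T := by
  apply Finset.sup'_le
  intro x _
  unfold tsqlUpdate
  split_ifs with hx
  · have hq : |Q sa| ≤ B := le_trans (abs_entry_le_maxNorm Q sa) hQ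
    have hB0 : 0 ≤ B := le_trans (abs_nonneg _) hq
    have hs1 : |Finset.univ.sup' Finset.univ_nonempty fun b => Q (j, b)| ≤ B :=
      abs_sup_le Q j B hQ
    have hs2 : |Finset.univ.sup' Finset.univ_nonempty fun e => Q (k, e)| ≤ B :=
      abs_sup_le Q k B hQ
    set s1 := Finset.univ.sup' Finset.univ_nonempty fun b => Q (j, b) with hs1def
    set s2 := Finset.univ.sup' Finset.univ_nonempty fun e => Q (k, e) with hs2def
    have hC0 : 0 ≤ Cmax := le_trans (abs_nonneg _) hc'
    have h3 : |c'' + β * s2| ≤ Cmax + β * B := by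
      refine (abs_add_le _ _).trans ?_
      rw [abs_mul, abs_of_nonneg hβ0]
      gcongr
    have h4 : |c' + β * s1 + β * θ * (c'' + β * s2)| ≤
        Cmax + β * B + β * |θ| * (Cmax + β * B) := by
      calc |c' + β * s1 + β * θ * (c'' + β * s2)|
          ≤ |c' + β * s1| + |β * θ * (c'' + β * s2)| := abs_add_le _ _
        _ ≤ (|c'| + |β * s1|) + |β * θ| * |c'' + β * s2| := by
            rw [abs_mul]; gcongr; exact abs_add_le _ _
        _ ≤ Cmax + β * B + β * |θ| * (Cmax + β * B) := by
            simp only [abs_mul, abs_of_nonneg hβ0]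
            have h5 : β * |θ| * |c'' + β * s2| ≤ β * |θ| * (Cmax + β * B) :=
              mul_le_mul_of_nonneg_left h3 (by positivity)
            have h6 : β * |s1| ≤ β * B := mul_le_mul_of_nonneg_left hs1 hβ0
            linarith
    calc |(1 - α) * Q sa + α * (c' + β * s1 + β * θ * (c'' + β * s2))|
        ≤ (1 - α) * |Q sa| + α * |c' + β * s1 + β * θ * (c'' + β * s2)| := by
          refine (abs_add_le _ _).trans ?_
          rw [abs_mul, abs_mul, abs_of_nonneg (by linarith), abs_of_nonneg hα0]
      _ ≤ (1 - α) * B + α * ((Cmax + β * B) * (1 + β * |θ|)) := by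
          have h6 : α * |c' + β * s1 + β * θ * (c'' + β * s2)| ≤
              α * ((Cmax + β * B) * (1 + β * |θ|)) := by
            refine mul_le_mul_of_nonneg_left (h4.trans_eq (by ring)) hα0
          have h7 : (1 - α) * |Q sa| ≤ (1 - α) * B :=
            mul_le_mul_of_nonneg_left hq (by linarith)
          linarith
      _ ≤ T := hT
  · exact le_trans (le_trans (abs_entry_le_maxNorm Q x) hQ) hBT

/-- If `‖Q₀‖ ≤ C_max/(1−β)`, `|θₙ| ≤ 1` and `|θₙ|` is nonincreasing, then the TSQL
iterates satisfy, for every `n ≥ 1`,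
`‖Qₙ‖ ≤ (C_max/(1−β))(1 + β|θ₀|) ∏_{i=1}^{n−1} (1 + αᵢ β² |θᵢ|)`. -/
theorem tsql_iterates_bound [Fintype S] [Fintype A] [Nonempty S] [Nonempty A]
    [DecidableEq S] [DecidableEq A]
    (β Cmax : ℝ) (hβ0 : 0 ≤ β) (hβ1 : β < 1) (hC : 0 ≤ Cmax)
    (Q : ℕ → S × A → ℝ) (sa : ℕ → S × A) (j k : ℕ → S) (c' c'' α θ : ℕ → ℝ)
    (hc' : ∀ n, |c' n| ≤ Cmax) (hc'' : ∀ n, |c'' n| ≤ Cmax)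
    (hα0 : ∀ n, 0 ≤ α n) (hα1 : ∀ n, α n ≤ 1)
    (hθ1 : ∀ n, |θ n| ≤ 1) (hθmono : Antitone fun n => |θ n|)
    (hupd : ∀ n, Q (n + 1) =
      tsqlUpdate β (Q n) (sa n) (j n) (k n) (c' n) (c'' n) (α n) (θ n))
    (hQ0 : maxNorm (Q 0) ≤ Cmax / (1 - β)) :
    ∀ n, 1 ≤ n → maxNorm (Q n) ≤
      (Cmax / (1 - β)) * (1 + β * |θ 0|) *
        ∏ i ∈ Finset.Icc 1 (n - 1), (1 + α i * β ^ 2 * |θ i|) := by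
  set M := Cmax / (1 - β) with hMdef
  have hβ1' : (0:ℝ) < 1 - β := by linarith
  have hM0 : 0 ≤ M := div_nonneg hC hβ1'.le
  have hMC : (1 - β) * M = Cmax := by
    rw [hMdef]; field_simp
  intro n hn
  induction n, hn using Nat.le_induction with
  | base =>
      simp only [Nat.sub_self, Finset.Icc_eq_empty_of_lt (by norm_num : (1:ℕ) > 0),
        Finset.prod_empty, mul_one]
      rw [hupd 0]
      unfold maxNorm at hQ0 ⊢
      refine tsql_step_bound β Cmax M (M * (1 + β * |θ 0|)) (Q 0) (sa 0) (j 0) (k 0)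
        (c' 0) (c'' 0) (α 0) (θ 0) hβ0 (hc' 0) (hc'' 0) (hα0 0) (hα1 0) hQ0 ?_ ?_
      · nlinarith [mul_nonneg hM0 (mul_nonneg hβ0 (abs_nonneg (θ 0)))]
      · have h1 : Cmax + β * M = M := by linarith
        rw [h1]
        nlinarith [mul_nonneg (mul_nonneg (sub_nonneg.2 (hα1 0)) hM0)
          (mul_nonneg hβ0 (abs_nonneg (θ 0)))]
  | succ n hn ih =>
      obtain ⟨m, rfl⟩ : ∃ m, n = m + 1 := ⟨n - 1, by omega⟩
      set P := ∏ i ∈ Finset.Icc 1 (m + 1 - 1), (1 + α i * β ^ 2 * |θ i|) with hPdef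
      have hP1 : 1 ≤ P := by
        rw [hPdef]
        calc (1:ℝ) = ∏ _i ∈ Finset.Icc 1 (m + 1 - 1), (1:ℝ) := by simp
          _ ≤ ∏ i ∈ Finset.Icc 1 (m + 1 - 1), (1 + α i * β ^ 2 * |θ i|) := by
              refine Finset.prod_le_prod (fun i _ => zero_le_one) fun i _ => ?_
              nlinarith [mul_nonneg (mul_nonneg (hα0 i) (sq_nonneg β)) (abs_nonneg (θ i))]
      have hprod : ∏ i ∈ Finset.Icc 1 (m + 1 + 1 - 1), (1 + α i * β ^ 2 * |θ i|) =
          P * (1 + α (m + 1) * β ^ 2 * |θ (m + 1)|) := by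
        rw [hPdef]
        simp only [Nat.add_sub_cancel]
        exact Finset.prod_Icc_succ_top (by omega) _
      rw [hprod, hupd (m + 1)]
      set B := M * (1 + β * |θ 0|) * P with hBdef
      have hB0 : 0 ≤ B := by positivity
      have hθm : |θ (m + 1)| ≤ |θ 0| := hθmono (Nat.zero_le _)
      have hθ0 : 0 ≤ |θ (m + 1)| := abs_nonneg _
      unfold maxNorm at ih ⊢
      rw [← mul_assoc]
      refine tsql_step_bound β Cmax B (B * (1 + α (m + 1) * β ^ 2 * |θ (m + 1)|))
        (Q (m + 1)) (sa (m + 1)) (j (m + 1)) (k (m + 1)) (c' (m + 1)) (c'' (m + 1))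
        (α (m + 1)) (θ (m + 1)) hβ0 (hc' (m + 1)) (hc'' (m + 1)) (hα0 (m + 1))
        (hα1 (m + 1)) ih ?_ ?_
      · nlinarith [mul_nonneg hB0 (mul_nonneg (mul_nonneg (hα0 (m + 1)) (sq_nonneg β)) hθ0)]
      · -- key: Cmax * (1 + β*|θ (m+1)|) ≤ (1-β) * B
        have hkey : Cmax * (1 + β * |θ (m + 1)|) ≤ (1 - β) * B := by
          have h1 : Cmax * (1 + β * |θ (m + 1)|) ≤ Cmax * (1 + β * |θ 0|) := by
            apply mul_le_mul_of_nonneg_left _ hC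
            nlinarith
          have h2 : (1 - β) * B = Cmax * (1 + β * |θ 0|) * P := by
            rw [hBdef, ← hMC]; ring
          have h3 : Cmax * (1 + β * |θ 0|) ≤ Cmax * (1 + β * |θ 0|) * P :=
            le_mul_of_one_le_right (by positivity) hP1
          linarith
        nlinarith [mul_le_mul_of_nonneg_left hkey (hα0 (m + 1))]
end

section
/- Suppose ‖Q_0‖ ≤ C_max/(1 − β) and the parameter sequence satisfies |θ_n| ≤ 1 for all n, |θ_n| monotonically decreasing to zero, and ∑_{n=1}^{∞} α_n |θ_n| < ∞. Then the iterates of two-step Q-learning are uniformly bounded: there exists a finite constant M, namely M = (C_max/(1 − β))(1 + β|θ_0|) · ∏_{i=1}^{∞} (1 + α_i β² |θ_i|), such that ‖Q_n‖ ≤ M for all n ∈ ℕ. -/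
open Finset Real Filter

variable {S A : Type*}

lemma my_one_le_prod {g : ℕ → ℝ} (hg0 : ∀ i, 0 ≤ g i) (s : Finset ℕ) :
    1 ≤ ∏ i ∈ s, (1 + g i) := by
  have := Finset.prod_le_prod (s := s) (f := fun _ => (1:ℝ)) (g := fun i => 1 + g i)
    (fun i _ => zero_le_one) (fun i _ => by simp; exact hg0 i)
  simpa using this

/-- multipliability of products of `1 + nonneg summable`, with partial-product bound. -/
lemma my_multipliable {g : ℕ → ℝ} (hg0 : ∀ i, 0 ≤ g i) (hg : Summable g) :
    Multipliable (fun i => 1 + g i) ∧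
      ∀ s : Finset ℕ, ∏ i ∈ s, (1 + g i) ≤ ∏' i, (1 + g i) := by
  have hmono : Monotone (fun s : Finset ℕ => ∏ i ∈ s, (1 + g i)) := by
    intro s t hst
    have h1 := my_one_le_prod hg0 s
    have h2 := my_one_le_prod hg0 (t \ s)
    have h3 := Finset.prod_sdiff (f := fun i => 1 + g i) hst
    dsimp only
    nlinarith
  have hbdd : BddAbove (Set.range fun s : Finset ℕ => ∏ i ∈ s, (1 + g i)) := by
    refine ⟨Real.exp (∑' i, g i), ?_⟩
    rintro x ⟨s, rfl⟩
    calc ∏ i ∈ s, (1 + g i) ≤ ∏ i ∈ s, Real.exp (g i) :=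
          Finset.prod_le_prod (fun i _ => by have := hg0 i; linarith)
            (fun i _ => by have := Real.add_one_le_exp (g i); linarith)
      _ = Real.exp (∑ i ∈ s, g i) := (Real.exp_sum s g).symm
      _ ≤ Real.exp (∑' i, g i) := Real.exp_le_exp.mpr (Summable.sum_le_tsum s (fun i _ => hg0 i) hg)
  have hhp : HasProd (fun i => 1 + g i) (⨆ s : Finset ℕ, ∏ i ∈ s, (1 + g i)) :=
    tendsto_atTop_ciSup hmono hbdd
  refine ⟨⟨_, hhp⟩, fun s => ?_⟩
  rw [hhp.tprod_eq]
  exact le_ciSup hbdd s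

lemma my_abs_sup'_le {A : Type*} [Fintype A] [Nonempty A] (f : A → ℝ) (c : ℝ)
    (h : ∀ b, |f b| ≤ c) : |Finset.univ.sup' Finset.univ_nonempty f| ≤ c := by
  rw [abs_le]
  constructor
  · obtain ⟨b⟩ := (inferInstance : Nonempty A)
    exact le_trans (by linarith [(abs_le.mp (h b)).1]) (Finset.le_sup' f (Finset.mem_univ b))
  · exact Finset.sup'_le _ _ fun b _ => (abs_le.mp (h b)).2

lemma my_tsql_step {S A : Type*} [Fintype S] [Fintype A] [Nonempty S] [Nonempty A]
    [DecidableEq S] [DecidableEq A]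
    (β Cmax : ℝ) (hβ0 : 0 ≤ β) (Q : S × A → ℝ) (sa : S × A) (j k : S)
    (c' c'' α θ : ℝ) (hc' : |c'| ≤ Cmax) (hc'' : |c''| ≤ Cmax)
    (hα0 : 0 ≤ α) (hα1 : α ≤ 1) (B C : ℝ) (hQ : maxNorm Q ≤ B) (hBC : B ≤ C)
    (harith : (1 - α) * B + α * ((1 + β * |θ|) * (Cmax + β * B)) ≤ C) :
    maxNorm (tsqlUpdate β Q sa j k c' c'' α θ) ≤ C := by
  have hQx : ∀ x : S × A, |Q x| ≤ B := fun x =>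
    le_trans (Finset.le_sup' (fun x => |Q x|) (Finset.mem_univ x)) hQ
  unfold maxNorm tsqlUpdate
  apply Finset.sup'_le
  intro x _
  by_cases hx : x = sa
  · rw [hx, if_pos rfl]
    set Sj := Finset.univ.sup' Finset.univ_nonempty fun b => Q (j, b) with hSj
    set Sk := Finset.univ.sup' Finset.univ_nonempty fun e => Q (k, e) with hSk
    have h1 : |Q sa| ≤ B := hQx sa
    have h2 : |Sj| ≤ B := my_abs_sup'_le _ _ fun b => hQx (j, b)
    have h3 : |Sk| ≤ B := my_abs_sup'_le _ _ fun e => hQx (k, e)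
    have hB0 : 0 ≤ B := le_trans (abs_nonneg _) h1
    have hX : |c' + β * Sj + β * θ * (c'' + β * Sk)| ≤ (1 + β * |θ|) * (Cmax + β * B) := by
      have t1 : |c' + β * Sj + β * θ * (c'' + β * Sk)|
          ≤ |c'| + β * |Sj| + β * |θ| * (|c''| + β * |Sk|) := by
        calc |c' + β * Sj + β * θ * (c'' + β * Sk)|
            ≤ |c' + β * Sj| + |β * θ * (c'' + β * Sk)| := abs_add_le _ _
          _ ≤ |c'| + |β * Sj| + |β * θ| * |c'' + β * Sk| := by
              rw [abs_mul]; linarith [abs_add_le c' (β * Sj)]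
          _ ≤ |c'| + β * |Sj| + β * |θ| * (|c''| + β * |Sk|) := by
              have e1 : |β * Sj| = β * |Sj| := by rw [abs_mul, abs_of_nonneg hβ0]
              have e2 : |β * θ| = β * |θ| := by rw [abs_mul, abs_of_nonneg hβ0]
              have e3 : |c'' + β * Sk| ≤ |c''| + β * |Sk| := by
                have := abs_add_le c'' (β * Sk)
                rw [abs_mul, abs_of_nonneg hβ0] at this
                exact this
              have hbt : 0 ≤ β * |θ| := mul_nonneg hβ0 (abs_nonneg θ)
              rw [e1, e2]
              nlinarith [mul_le_mul_of_nonneg_left e3 hbt]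
      have hθn : 0 ≤ |θ| := abs_nonneg θ
      have hbt : 0 ≤ β * |θ| := mul_nonneg hβ0 hθn
      have hm1 : β * |Sj| ≤ β * B := mul_le_mul_of_nonneg_left h2 hβ0
      have hm2 : |c''| + β * |Sk| ≤ Cmax + β * B := by
        have := mul_le_mul_of_nonneg_left h3 hβ0
        linarith
      have hm3 : β * |θ| * (|c''| + β * |Sk|) ≤ β * |θ| * (Cmax + β * B) :=
        mul_le_mul_of_nonneg_left hm2 hbt
      nlinarith
    calc |(1 - α) * Q sa + α * (c' + β * Sj + β * θ * (c'' + β * Sk))|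
        ≤ (1 - α) * |Q sa| + α * |c' + β * Sj + β * θ * (c'' + β * Sk)| := by
          have := abs_add_le ((1 - α) * Q sa) (α * (c' + β * Sj + β * θ * (c'' + β * Sk)))
          rw [abs_mul, abs_mul, abs_of_nonneg hα0,
            abs_of_nonneg (by linarith : (0:ℝ) ≤ 1 - α)] at this
          exact this
      _ ≤ (1 - α) * B + α * ((1 + β * |θ|) * (Cmax + β * B)) := by
          have := mul_le_mul_of_nonneg_left hX hα0
          have := mul_le_mul_of_nonneg_left h1 (by linarith : (0:ℝ) ≤ 1 - α)
          linarith
      _ ≤ C := harith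
  · rw [if_neg hx]
    exact le_trans (hQx x) hBC

set_option maxHeartbeats 1000000 in
/-- Under `‖Q₀‖ ≤ C_max/(1−β)`, `|θₙ| ≤ 1`, `|θₙ| ↓ 0`, and `∑ₙ αₙ|θₙ| < ∞`, the TSQL
iterates are uniformly bounded by
`M = (C_max/(1−β))(1 + β|θ₀|) ∏_{i=1}^∞ (1 + αᵢ β² |θᵢ|)`. -/
theorem tsql_iterates_uniformly_bounded [Fintype S] [Fintype A] [Nonempty S] [Nonempty A]
    [DecidableEq S] [DecidableEq A]
    (β Cmax : ℝ) (hβ0 : 0 ≤ β) (hβ1 : β < 1) (hC : 0 ≤ Cmax)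
    (Q : ℕ → S × A → ℝ) (sa : ℕ → S × A) (j k : ℕ → S) (c' c'' α θ : ℕ → ℝ)
    (hc' : ∀ n, |c' n| ≤ Cmax) (hc'' : ∀ n, |c'' n| ≤ Cmax)
    (hα0 : ∀ n, 0 ≤ α n) (hα1 : ∀ n, α n ≤ 1)
    (hθ1 : ∀ n, |θ n| ≤ 1) (hθmono : Antitone fun n => |θ n|)
    (hθ0 : Tendsto (fun n => |θ n|) atTop (nhds 0))
    (hsum : Summable fun n => α n * |θ n|)
    (hupd : ∀ n, Q (n + 1) =
      tsqlUpdate β (Q n) (sa n) (j n) (k n) (c' n) (c'' n) (α n) (θ n))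
    (hQ0 : maxNorm (Q 0) ≤ Cmax / (1 - β)) :
    ∃ M : ℝ, M = (Cmax / (1 - β)) * (1 + β * |θ 0|) *
        (∏' i : ℕ, (1 + α (i + 1) * β ^ 2 * |θ (i + 1)|)) ∧
      ∀ n : ℕ, maxNorm (Q n) ≤ M := by
  have hβ' : (0:ℝ) < 1 - β := by linarith
  set D : ℝ := Cmax / (1 - β) with hDdef
  have hD0 : 0 ≤ D := div_nonneg hC hβ'.le
  have hCeq : Cmax = (1 - β) * D := by
    rw [hDdef, mul_comm, div_mul_cancel₀ _ hβ'.ne']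
  set g : ℕ → ℝ := fun i => α (i + 1) * β ^ 2 * |θ (i + 1)| with hgdef
  have hg0 : ∀ i, 0 ≤ g i := fun i =>
    mul_nonneg (mul_nonneg (hα0 _) (by positivity)) (abs_nonneg _)
  have hgsum : Summable g := by
    have h1 : Summable (fun i => α (i + 1) * |θ (i + 1)|) :=
      (summable_nat_add_iff 1).mpr hsum
    refine (h1.mul_left (β ^ 2)).congr fun i => ?_
    simp only [hgdef]; ring
  set P : ℝ := ∏' i, (1 + g i) with hPdef
  have hprodle : ∀ s : Finset ℕ, ∏ i ∈ s, (1 + g i) ≤ P := (my_multipliable hg0 hgsum).2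
  have hP1 : (1:ℝ) ≤ P := by simpa using hprodle ∅
  set D0 : ℝ := D * (1 + β * |θ 0|) with hD0def
  have hDD0 : D ≤ D0 := by
    have : 0 ≤ β * |θ 0| := mul_nonneg hβ0 (abs_nonneg _)
    nlinarith
  have hD00 : 0 ≤ D0 := le_trans hD0 hDD0
  set B : ℕ → ℝ := fun n => D0 * ∏ i ∈ Finset.Ico 1 n, (1 + α i * β ^ 2 * |θ i|) with hBdef
  have hf0 : ∀ i : ℕ, 0 ≤ α i * β ^ 2 * |θ i| := fun i =>
    mul_nonneg (mul_nonneg (hα0 _) (by positivity)) (abs_nonneg _)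
  have hprod1 : ∀ n, (1:ℝ) ≤ ∏ i ∈ Finset.Ico 1 n, (1 + α i * β ^ 2 * |θ i|) := fun n =>
    my_one_le_prod hf0 _
  have hBM : ∀ n, B n ≤ D0 * P := by
    intro n
    have : ∏ i ∈ Finset.Ico 1 n, (1 + α i * β ^ 2 * |θ i|) ≤ P := by
      rw [Finset.prod_Ico_eq_prod_range]
      calc ∏ i ∈ Finset.range (n - 1), (1 + α (1 + i) * β ^ 2 * |θ (1 + i)|)
          = ∏ i ∈ Finset.range (n - 1), (1 + g i) := by
            refine Finset.prod_congr rfl fun i _ => by rw [hgdef]; rw [add_comm 1 i]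
        _ ≤ P := hprodle _
    exact mul_le_mul_of_nonneg_left this hD00
  have hB : ∀ n, maxNorm (Q n) ≤ B n := by
    intro n
    induction n with
    | zero =>
      have : B 0 = D0 := by
        rw [hBdef]; simp
      rw [this]
      exact le_trans hQ0 hDD0
    | succ n ih =>
      rcases n with _ | m
      · -- step from 0 to 1
        have hB1 : B 1 = D0 := by rw [hBdef]; simp
        rw [hupd 0, hB1]
        refine my_tsql_step β Cmax hβ0 _ _ _ _ _ _ _ _ (hc' 0) (hc'' 0) (hα0 0) (hα1 0)
          D D0 hQ0 hDD0 ?_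
        have h1 : 0 ≤ β * |θ 0| := mul_nonneg hβ0 (abs_nonneg _)
        have h2 : Cmax + β * D = D := by rw [hCeq]; ring
        rw [h2, hD0def]
        nlinarith [hα0 0, hα1 0]
      · -- step from n = m+1 ≥ 1 to n+1
        set n := m + 1
        have hBsucc : B (n + 1) = B n * (1 + α n * β ^ 2 * |θ n|) := by
          rw [hBdef]
          dsimp only
          rw [Finset.prod_Ico_succ_top (by omega : 1 ≤ n)]
          ring
        have hBneq : B n = D0 * ∏ i ∈ Finset.Ico 1 n, (1 + α i * β ^ 2 * |θ i|) := rfl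
        have hBn1 : D0 ≤ B n := by
          rw [hBneq]
          nlinarith [hprod1 n]
        have hBn0 : 0 ≤ B n := le_trans hD00 hBn1
        have hθle : |θ n| ≤ |θ 0| := hθmono (Nat.zero_le n)
        have hθn0 : 0 ≤ |θ n| := abs_nonneg _
        have hDB : D * (1 + β * |θ n|) ≤ B n := by
          have h5 : D * (1 + β * |θ n|) ≤ D * (1 + β * |θ 0|) := by
            nlinarith [mul_nonneg (mul_nonneg hD0 hβ0) (sub_nonneg.mpr hθle)]
          have h6 : D0 = D * (1 + β * |θ 0|) := rfl
          linarith
        rw [hupd n, hBsucc]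
        refine my_tsql_step β Cmax hβ0 _ _ _ _ _ _ _ _ (hc' n) (hc'' n) (hα0 n) (hα1 n)
          (B n) _ ih ?_ ?_
        · nlinarith [hBn0, mul_nonneg (mul_nonneg (hα0 n) (sq_nonneg β)) hθn0]
        · rw [hCeq]
          nlinarith [mul_le_mul_of_nonneg_left
            (mul_le_mul_of_nonneg_left hDB (by linarith : (0:ℝ) ≤ 1 - β)) (hα0 n)]
  exact ⟨_, rfl, fun n => le_trans (hB n) (le_trans (hBM n) (le_of_eq (by rw [hD0def])))⟩
end

section
/- Suppose ‖Q_0‖ ≤ C_max/(1 − β). Then after one smooth two-step Q-learning update, for every (i,a) ∈ S × A, |Q_1(i,a)| ≤ (C_max/(1 − β) + (log|A|)/(N(1 − β)))(1 + β|θ_0|); consequently ‖Q_1‖ ≤ (C_max/(1 − β) + (log|A|)/(N(1 − β)))(1 + β|θ_0|). -/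
open Finset Real Filter

variable {S A : Type*}

/-- One smooth two-step Q-learning (S-TSQL) update: the selected pair `sa` is updated
using rewards `c'`, `c''`, next states `j`, `k`, step size `α`, parameter `θ`, and the
log-sum-exp operator with parameter `N` in place of the max; all other entries stay
unchanged. -/
noncomputable def stsqlUpdate [Fintype A] [DecidableEq S] [DecidableEq A]
    (β N : ℝ) (Q : S × A → ℝ) (sa : S × A) (j k : S) (c' c'' α θ : ℝ) : S × A → ℝ :=
  fun x => if x = sa then
      (1 - α) * Q sa +
        α * (c' + (β / N) * Real.log (∑ b, Real.exp (N * Q (j, b)))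
          + β * θ * (c'' + (β / N) * Real.log (∑ e, Real.exp (N * Q (k, e)))))
    else Q x

/-- If `‖Q₀‖ ≤ C_max/(1−β)` then after one S-TSQL update,
`|Q₁(i,a)| ≤ (C_max/(1−β) + log|A|/(N(1−β)))(1 + β|θ₀|)` for every `(i,a)`, and hence
the same bound holds for `‖Q₁‖`. -/
theorem stsql_one_step_bound [Fintype S] [Fintype A] [Nonempty S] [Nonempty A]
    [DecidableEq S] [DecidableEq A]
    (β Cmax : ℝ) (hβ0 : 0 ≤ β) (hβ1 : β < 1) (hC : 0 ≤ Cmax)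
    (N : ℝ) (hN : 0 < N)
    (Q0 : S × A → ℝ) (sa : S × A) (j k : S) (c' c'' α0 θ0 : ℝ)
    (hc' : |c'| ≤ Cmax) (hc'' : |c''| ≤ Cmax)
    (hα0 : 0 ≤ α0) (hα1 : α0 ≤ 1) (hθ : |θ0| ≤ 1)
    (hQ0 : maxNorm Q0 ≤ Cmax / (1 - β)) :
    (∀ x : S × A, |stsqlUpdate β N Q0 sa j k c' c'' α0 θ0 x| ≤
        (Cmax / (1 - β) + Real.log (Fintype.card A) / (N * (1 - β))) * (1 + β * |θ0|)) ∧
    maxNorm (stsqlUpdate β N Q0 sa j k c' c'' α0 θ0) ≤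
      (Cmax / (1 - β) + Real.log (Fintype.card A) / (N * (1 - β))) * (1 + β * |θ0|) := by
  have h1β : (0:ℝ) < 1 - β := by linarith
  have hA1 : (1:ℝ) ≤ (Fintype.card A : ℝ) := by exact_mod_cast Fintype.card_pos
  have hlogA : 0 ≤ Real.log (Fintype.card A) := Real.log_nonneg hA1
  set M := Cmax / (1 - β) with hMdef
  set L := Real.log (Fintype.card A) / (N * (1 - β)) with hLdef
  have hM0 : 0 ≤ M := div_nonneg hC h1β.le
  have hL0 : 0 ≤ L := div_nonneg hlogA (mul_pos hN h1β).le
  have hCM : Cmax = M * (1 - β) := by rw [hMdef, div_mul_cancel₀ _ h1β.ne']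
  have ht0 : 0 ≤ β * |θ0| := mul_nonneg hβ0 (abs_nonneg _)
  have hQle : ∀ x : S × A, |Q0 x| ≤ M :=
    fun x => le_trans (Finset.le_sup' (fun y => |Q0 y|) (Finset.mem_univ x)) hQ0
  -- log-sum-exp bound
  have hlse : ∀ s : S, |Real.log (∑ b, Real.exp (N * Q0 (s, b)))| ≤
      Real.log (Fintype.card A) + N * M := by
    intro s
    obtain ⟨b0⟩ := (inferInstance : Nonempty A)
    have hpos : (0:ℝ) < ∑ b, Real.exp (N * Q0 (s, b)) :=
      Finset.sum_pos (fun b _ => Real.exp_pos _) ⟨b0, Finset.mem_univ b0⟩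
    have hupper : ∑ b, Real.exp (N * Q0 (s, b)) ≤ (Fintype.card A : ℝ) * Real.exp (N * M) := by
      calc ∑ b, Real.exp (N * Q0 (s, b)) ≤ ∑ _b : A, Real.exp (N * M) := by
            apply Finset.sum_le_sum
            intro b _
            have := (abs_le.1 (hQle (s, b))).2
            exact Real.exp_le_exp.2 (by nlinarith)
        _ = (Fintype.card A : ℝ) * Real.exp (N * M) := by
            simp [Finset.sum_const, nsmul_eq_mul, Finset.card_univ]
    have hlower : Real.exp (N * (-M)) ≤ ∑ b, Real.exp (N * Q0 (s, b)) := by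
      have h1 : Real.exp (N * (-M)) ≤ Real.exp (N * Q0 (s, b0)) := by
        have := (abs_le.1 (hQle (s, b0))).1
        exact Real.exp_le_exp.2 (by nlinarith)
      exact h1.trans (Finset.single_le_sum (f := fun b => Real.exp (N * Q0 (s, b)))
        (fun b _ => (Real.exp_pos _).le) (Finset.mem_univ b0))
    rw [abs_le]
    constructor
    · have h2 : Real.log (Real.exp (N * (-M))) ≤ Real.log (∑ b, Real.exp (N * Q0 (s, b))) :=
        Real.log_le_log (Real.exp_pos _) hlower
      rw [Real.log_exp] at h2
      nlinarith
    · have h2 : Real.log (∑ b, Real.exp (N * Q0 (s, b))) ≤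
          Real.log ((Fintype.card A : ℝ) * Real.exp (N * M)) :=
        Real.log_le_log hpos hupper
      rwa [Real.log_mul (by positivity) (Real.exp_ne_zero _), Real.log_exp] at h2
  -- bound on the discounted lse term
  have hT : ∀ s : S, |(β / N) * Real.log (∑ b, Real.exp (N * Q0 (s, b)))| ≤
      β * M + β * Real.log (Fintype.card A) / N := by
    intro s
    rw [abs_mul, abs_of_nonneg (div_nonneg hβ0 hN.le)]
    have h := mul_le_mul_of_nonneg_left (hlse s) (div_nonneg hβ0 hN.le)
    calc β / N * |Real.log (∑ b, Real.exp (N * Q0 (s, b)))|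
        ≤ β / N * (Real.log (Fintype.card A) + N * M) := h
      _ = β * M + β * Real.log (Fintype.card A) / N := by field_simp; ring
  have hBL : β * Real.log (Fintype.card A) / N ≤ L := by
    rw [hLdef, div_le_div_iff₀ hN (mul_pos hN h1β)]
    have hb : β * (1 - β) ≤ 1 := by nlinarith
    nlinarith [mul_le_mul_of_nonneg_left hb (mul_nonneg hlogA hN.le)]
  -- key pointwise bound
  have key : ∀ x : S × A, |stsqlUpdate β N Q0 sa j k c' c'' α0 θ0 x| ≤ (M + L) * (1 + β * |θ0|) := by
    intro x
    have hMX : M ≤ (M + L) * (1 + β * |θ0|) := by nlinarith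
    unfold stsqlUpdate
    by_cases hx : x = sa
    · simp only [hx, if_pos rfl]
      set Tj := (β / N) * Real.log (∑ b, Real.exp (N * Q0 (j, b))) with hTj
      set Tk := (β / N) * Real.log (∑ e, Real.exp (N * Q0 (k, e))) with hTk
      have hTjb := hT j
      have hTkb := hT k
      have hinner : |c' + Tj + β * θ0 * (c'' + Tk)| ≤
          (M + β * Real.log (Fintype.card A) / N) * (1 + β * |θ0|) := by
        have habsβ : |β * θ0| = β * |θ0| := by rw [abs_mul, abs_of_nonneg hβ0]
        have h1 : |c' + Tj + β * θ0 * (c'' + Tk)| ≤ |c'| + |Tj| + β * |θ0| * (|c''| + |Tk|) := by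
          calc |c' + Tj + β * θ0 * (c'' + Tk)| ≤ |c' + Tj| + |β * θ0 * (c'' + Tk)| := abs_add_le _ _
            _ ≤ (|c'| + |Tj|) + |β * θ0| * |c'' + Tk| := by
                rw [abs_mul (β * θ0)]
                exact add_le_add (abs_add_le _ _) le_rfl
            _ ≤ |c'| + |Tj| + β * |θ0| * (|c''| + |Tk|) := by
                rw [habsβ]
                exact add_le_add le_rfl (mul_le_mul_of_nonneg_left (abs_add_le _ _) ht0)
        have h2 : |c'| + |Tj| ≤ M + β * Real.log (Fintype.card A) / N := by
          have h0 : Cmax + β * M = M := by rw [hCM]; ring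
          linarith [hc', hTjb]
        have h3 : |c''| + |Tk| ≤ M + β * Real.log (Fintype.card A) / N := by
          have h0 : Cmax + β * M = M := by rw [hCM]; ring
          linarith [hc'', hTkb]
        calc |c' + Tj + β * θ0 * (c'' + Tk)| ≤ |c'| + |Tj| + β * |θ0| * (|c''| + |Tk|) := h1
          _ ≤ (M + β * Real.log (Fintype.card A) / N) + β * |θ0| * (M + β * Real.log (Fintype.card A) / N) := by
              have := mul_le_mul_of_nonneg_left h3 ht0
              linarith
          _ = (M + β * Real.log (Fintype.card A) / N) * (1 + β * |θ0|) := by ring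
      have hsa := hQle sa
      calc |(1 - α0) * Q0 sa + α0 * (c' + Tj + β * θ0 * (c'' + Tk))|
          ≤ (1 - α0) * |Q0 sa| + α0 * |c' + Tj + β * θ0 * (c'' + Tk)| := by
            refine (abs_add_le _ _).trans ?_
            rw [abs_mul, abs_mul, abs_of_nonneg (by linarith : (0:ℝ) ≤ 1 - α0),
              abs_of_nonneg hα0]
        _ ≤ (1 - α0) * M + α0 * ((M + β * Real.log (Fintype.card A) / N) * (1 + β * |θ0|)) := by
            have h4 := mul_le_mul_of_nonneg_left hsa (by linarith : (0:ℝ) ≤ 1 - α0)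
            have h5 := mul_le_mul_of_nonneg_left hinner hα0
            linarith
        _ ≤ (M + L) * (1 + β * |θ0|) := by
            have hXY : M + β * Real.log (Fintype.card A) / N ≤ M + L := by linarith
            have h6 : (M + β * Real.log (Fintype.card A) / N) * (1 + β * |θ0|) ≤
                (M + L) * (1 + β * |θ0|) := mul_le_mul_of_nonneg_right hXY (by linarith)
            have h7 := mul_le_mul_of_nonneg_left h6 hα0
            have h8 := mul_le_mul_of_nonneg_left hMX (by linarith : (0:ℝ) ≤ 1 - α0)
            linarith
    · simp only [if_neg hx]
      exact (hQle x).trans hMX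
  exact ⟨key, Finset.sup'_le _ _ fun x _ => key x⟩
end

section
/- Let L ≥ (C_max/(1 − β) + (log|A|)/(N(1 − β)))(1 + β|θ_0|) and suppose ‖Q_n‖ ≤ L. Then the Q-function Q_{n+1} obtained from one smooth two-step Q-learning update with step size α_n ∈ [0,1] and parameter θ_n with |θ_n| ≤ |θ_0| satisfies ‖Q_{n+1}‖ ≤ L (1 + α_n β² |θ_n|). -/
open Finset Real Filter

variable {S A : Type*}

set_option maxHeartbeats 1000000 in
/-- If `L ≥ (C_max/(1−β) + log|A|/(N(1−β)))(1 + β|θ₀|)` and `‖Qₙ‖ ≤ L`, then one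
S-TSQL update gives `‖Qₙ₊₁‖ ≤ L (1 + αₙ β² |θₙ|)`. -/
theorem stsql_inductive_step_bound [Fintype S] [Fintype A] [Nonempty S] [Nonempty A]
    [DecidableEq S] [DecidableEq A]
    (β Cmax : ℝ) (hβ0 : 0 ≤ β) (hβ1 : β < 1) (hC : 0 ≤ Cmax)
    (N : ℝ) (hN : 0 < N)
    (Qn : S × A → ℝ) (sa : S × A) (j k : S) (c' c'' αn θn θ0 : ℝ)
    (hc' : |c'| ≤ Cmax) (hc'' : |c''| ≤ Cmax)
    (hα0 : 0 ≤ αn) (hα1 : αn ≤ 1) (hθ1 : |θn| ≤ 1) (hθ : |θn| ≤ |θ0|)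
    (L : ℝ)
    (hL : (Cmax / (1 - β) + Real.log (Fintype.card A) / (N * (1 - β))) * (1 + β * |θ0|) ≤ L)
    (hQn : maxNorm Qn ≤ L) :
    maxNorm (stsqlUpdate β N Qn sa j k c' c'' αn θn) ≤ L * (1 + αn * β ^ 2 * |θn|) := by
  have hA1 : (1:ℝ) ≤ Fintype.card A := by exact_mod_cast Fintype.card_pos
  have hlogA : 0 ≤ Real.log (Fintype.card A) := Real.log_nonneg hA1
  have h1β : 0 < 1 - β := by linarith
  have hθn0 : 0 ≤ |θn| := abs_nonneg _
  have hL0 : 0 ≤ L := by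
    refine le_trans ?_ hL
    have h1 : 0 ≤ Cmax / (1 - β) + Real.log (Fintype.card A) / (N * (1 - β)) :=
      add_nonneg (div_nonneg hC h1β.le) (div_nonneg hlogA (by positivity))
    have h2 : 0 ≤ 1 + β * |θ0| := by positivity
    exact mul_nonneg h1 h2
  have hQ : ∀ x : S × A, |Qn x| ≤ L := fun x =>
    le_trans (Finset.le_sup' (fun y => |Qn y|) (Finset.mem_univ x)) hQn
  have key : ∀ s : S, |Real.log (∑ b, Real.exp (N * Qn (s, b)))|
      ≤ N * L + Real.log (Fintype.card A) := by
    intro s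
    have hpos : 0 < ∑ b, Real.exp (N * Qn (s, b)) :=
      Finset.sum_pos (fun b _ => Real.exp_pos _) Finset.univ_nonempty
    rw [abs_le]
    constructor
    · obtain ⟨b0⟩ := (inferInstance : Nonempty A)
      have h1 : Real.exp (N * Qn (s, b0)) ≤ ∑ b, Real.exp (N * Qn (s, b)) :=
        Finset.single_le_sum (f := fun b => Real.exp (N * Qn (s, b)))
          (fun b _ => (Real.exp_pos _).le) (Finset.mem_univ b0)
      have h2 : N * Qn (s, b0) ≤ Real.log (∑ b, Real.exp (N * Qn (s, b))) := by
        rw [← Real.log_exp (N * Qn (s, b0))]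
        exact Real.log_le_log (Real.exp_pos _) h1
      have h3 : -L ≤ Qn (s, b0) := (abs_le.mp (hQ (s, b0))).1
      nlinarith
    · have h1 : ∑ b, Real.exp (N * Qn (s, b)) ≤ (Fintype.card A : ℝ) * Real.exp (N * L) := by
        calc ∑ b, Real.exp (N * Qn (s, b)) ≤ ∑ _b : A, Real.exp (N * L) :=
              Finset.sum_le_sum (fun b _ => Real.exp_le_exp.mpr
                (by nlinarith [(abs_le.mp (hQ (s, b))).2]))
          _ = (Fintype.card A : ℝ) * Real.exp (N * L) := by
              simp [Finset.sum_const, Finset.card_univ, nsmul_eq_mul]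
      have h2 := Real.log_le_log hpos h1
      rw [Real.log_mul (by positivity) (Real.exp_ne_zero _), Real.log_exp] at h2
      linarith
  have hNne : N ≠ 0 := ne_of_gt hN
  have hkey : (Cmax + Real.log (Fintype.card A) / N) * (1 + β * |θn|) ≤ (1 - β) * L := by
    have hD : Cmax / (1 - β) + Real.log (Fintype.card A) / (N * (1 - β))
        = (Cmax + Real.log (Fintype.card A) / N) / (1 - β) := by
      field_simp
    rw [hD, div_mul_eq_mul_div, div_le_iff₀ h1β] at hL
    have h2 : 0 ≤ Cmax + Real.log (Fintype.card A) / N :=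
      add_nonneg hC (div_nonneg hlogA hN.le)
    nlinarith [mul_le_mul_of_nonneg_left hθ (mul_nonneg h2 hβ0)]
  rw [maxNorm]
  apply Finset.sup'_le
  intro x _
  by_cases hx : x = sa
  · rw [hx, stsqlUpdate, if_pos rfl]
    set E1 := Real.log (∑ b, Real.exp (N * Qn (j, b))) with hE1
    set E2 := Real.log (∑ e, Real.exp (N * Qn (k, e))) with hE2
    have hbE1 : |(β / N) * E1| ≤ β * L + β * Real.log (Fintype.card A) / N := by
      rw [abs_mul, abs_of_nonneg (div_nonneg hβ0 hN.le)]
      calc β / N * |E1| ≤ β / N * (N * L + Real.log (Fintype.card A)) :=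
            mul_le_mul_of_nonneg_left (key j) (div_nonneg hβ0 hN.le)
        _ = β * L + β * Real.log (Fintype.card A) / N := by field_simp
    have hbE2 : |(β / N) * E2| ≤ β * L + β * Real.log (Fintype.card A) / N := by
      rw [abs_mul, abs_of_nonneg (div_nonneg hβ0 hN.le)]
      calc β / N * |E2| ≤ β / N * (N * L + Real.log (Fintype.card A)) :=
            mul_le_mul_of_nonneg_left (key k) (div_nonneg hβ0 hN.le)
        _ = β * L + β * Real.log (Fintype.card A) / N := by field_simp
    set T := Cmax + β * L + β * Real.log (Fintype.card A) / N with hT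
    have hT1 : |c' + (β / N) * E1| ≤ T :=
      (abs_add_le _ _).trans (by rw [hT]; linarith [hbE1])
    have hT2 : |c'' + (β / N) * E2| ≤ T :=
      (abs_add_le _ _).trans (by rw [hT]; linarith [hbE2])
    have hT0 : 0 ≤ T := le_trans (abs_nonneg _) hT1
    have hbig : |c' + (β / N) * E1 + β * θn * (c'' + (β / N) * E2)|
        ≤ T + β * |θn| * T := by
      calc |c' + (β / N) * E1 + β * θn * (c'' + (β / N) * E2)|
          ≤ |c' + (β / N) * E1| + |β * θn * (c'' + (β / N) * E2)| := abs_add_le _ _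
        _ = |c' + (β / N) * E1| + β * |θn| * |c'' + (β / N) * E2| := by
            rw [abs_mul, abs_mul, abs_of_nonneg hβ0]
        _ ≤ T + β * |θn| * T :=
            add_le_add hT1 (mul_le_mul_of_nonneg_left hT2 (mul_nonneg hβ0 hθn0))
    have hmain : |(1 - αn) * Qn sa + αn * (c' + (β / N) * E1
        + β * θn * (c'' + (β / N) * E2))| ≤ (1 - αn) * L + αn * (T + β * |θn| * T) := by
      calc |(1 - αn) * Qn sa + αn * (c' + (β / N) * E1 + β * θn * (c'' + (β / N) * E2))|
          ≤ |(1 - αn) * Qn sa| + |αn * (c' + (β / N) * E1 + β * θn * (c'' + (β / N) * E2))| :=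
            abs_add_le _ _
        _ = (1 - αn) * |Qn sa| + αn * |c' + (β / N) * E1 + β * θn * (c'' + (β / N) * E2)| := by
            rw [abs_mul, abs_mul, abs_of_nonneg (by linarith : (0:ℝ) ≤ 1 - αn),
              abs_of_nonneg hα0]
        _ ≤ (1 - αn) * L + αn * (T + β * |θn| * T) :=
            add_le_add (mul_le_mul_of_nonneg_left (hQ sa) (by linarith))
              (mul_le_mul_of_nonneg_left hbig hα0)
    refine hmain.trans ?_
    have hdnn : 0 ≤ Real.log (Fintype.card A) / N := div_nonneg hlogA hN.le
    have h1t : (0:ℝ) ≤ 1 + β * |θn| := by positivity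
    have hTle : T ≤ Cmax + Real.log (Fintype.card A) / N + β * L := by
      rw [hT, mul_div_assoc]
      nlinarith [hdnn]
    have step1 : T + β * |θn| * T ≤ L + β ^ 2 * |θn| * L := by
      calc T + β * |θn| * T = T * (1 + β * |θn|) := by ring
        _ ≤ (Cmax + Real.log (Fintype.card A) / N + β * L) * (1 + β * |θn|) :=
            mul_le_mul_of_nonneg_right hTle h1t
        _ = (Cmax + Real.log (Fintype.card A) / N) * (1 + β * |θn|)
            + β * L * (1 + β * |θn|) := by ring
        _ ≤ (1 - β) * L + β * L * (1 + β * |θn|) := add_le_add_left hkey _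
        _ = L + β ^ 2 * |θn| * L := by ring
    have step2 := mul_le_mul_of_nonneg_left step1 hα0
    nlinarith [step2]
  · have hupd : stsqlUpdate β N Qn sa j k c' c'' αn θn x = Qn x := by
      simp only [stsqlUpdate, if_neg hx]
    rw [hupd]
    have h1 := hQ x
    have h2 : 0 ≤ αn * β ^ 2 * |θn| := by positivity
    nlinarith [mul_nonneg hL0 h2]
end

section
/- Suppose ‖Q_0‖ ≤ C_max/(1 − β) and the parameter sequence satisfies |θ_n| ≤ 1 for all n and |θ_n| is monotonically nonincreasing. Then the iterates of smooth two-step Q-learning satisfy, for every n ≥ 1, ‖Q_n‖ ≤ (C_max/(1 − β) + (log|A|)/(N(1 − β)))(1 + β|θ_0|) · ∏_{i=1}^{n−1} (1 + α_i β² |θ_i|). -/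
set_option maxHeartbeats 1000000


open Finset Real Filter

variable {S A : Type*}

lemma abs_le_maxNorm [Fintype S] [Fintype A] [Nonempty S] [Nonempty A]
    (Q : S × A → ℝ) (x : S × A) : |Q x| ≤ maxNorm Q :=
  Finset.le_sup' (fun x => |Q x|) (Finset.mem_univ x)

lemma maxNorm_le [Fintype S] [Fintype A] [Nonempty S] [Nonempty A]
    {Q : S × A → ℝ} {M : ℝ} (h : ∀ x, |Q x| ≤ M) : maxNorm Q ≤ M :=
  Finset.sup'_le _ _ fun x _ => h x

lemma logsumexp_abs_le [Fintype A] [Nonempty A] (N M : ℝ) (hN : 0 < N) (hM : 0 ≤ M)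
    (f : A → ℝ) (hf : ∀ b, |f b| ≤ M) :
    |Real.log (∑ b, Real.exp (N * f b))| ≤ Real.log (Fintype.card A) + N * M := by
  have hpos : (0:ℝ) < ∑ b, Real.exp (N * f b) :=
    Finset.sum_pos (fun b _ => Real.exp_pos _) Finset.univ_nonempty
  have hcard : (1:ℝ) ≤ (Fintype.card A : ℝ) := by exact_mod_cast Fintype.card_pos
  have hlogcard : 0 ≤ Real.log (Fintype.card A) := Real.log_nonneg hcard
  rw [abs_le]
  constructor
  · obtain ⟨b₀⟩ := ‹Nonempty A›
    have h1 : Real.exp (N * f b₀) ≤ ∑ b, Real.exp (N * f b) :=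
      Finset.single_le_sum (f := fun b => Real.exp (N * f b))
        (fun b _ => (Real.exp_pos _).le) (Finset.mem_univ b₀)
    have h2 : N * f b₀ ≤ Real.log (∑ b, Real.exp (N * f b)) := by
      rw [← Real.log_exp (N * f b₀)]
      exact Real.log_le_log (Real.exp_pos _) h1
    have h3 := (abs_le.mp (hf b₀)).1
    nlinarith
  · have h3 : (∑ b, Real.exp (N * f b)) ≤ (Fintype.card A : ℝ) * Real.exp (N * M) := by
      calc (∑ b, Real.exp (N * f b)) ≤ ∑ _b : A, Real.exp (N * M) := by
            refine Finset.sum_le_sum fun b _ => Real.exp_le_exp.mpr ?_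
            have := (abs_le.mp (hf b)).2
            nlinarith
        _ = (Fintype.card A : ℝ) * Real.exp (N * M) := by
            simp [Finset.sum_const, nsmul_eq_mul]
    calc Real.log (∑ b, Real.exp (N * f b))
        ≤ Real.log ((Fintype.card A : ℝ) * Real.exp (N * M)) := Real.log_le_log hpos h3
      _ = Real.log (Fintype.card A) + N * M := by
          rw [Real.log_mul (by positivity) (Real.exp_ne_zero _), Real.log_exp]

lemma stsql_step [Fintype S] [Fintype A] [Nonempty S] [Nonempty A]
    [DecidableEq S] [DecidableEq A]
    (β Cmax N : ℝ) (hβ0 : 0 ≤ β) (hN : 0 < N)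
    (Q : S × A → ℝ) (sa : S × A) (j k : S) (c' c'' α θ : ℝ)
    (hc' : |c'| ≤ Cmax) (hc'' : |c''| ≤ Cmax)
    (hα0 : 0 ≤ α) (hα1 : α ≤ 1)
    (M K : ℝ) (hM : maxNorm Q ≤ M) (hMK : M ≤ K)
    (hXK : (1 - α) * M +
        α * ((1 + β * |θ|) * (Cmax + β * (Real.log (Fintype.card A) / N) + β * M)) ≤ K) :
    maxNorm (stsqlUpdate β N Q sa j k c' c'' α θ) ≤ K := by
  have hM0 : 0 ≤ M := le_trans (abs_nonneg _) (le_trans (abs_le_maxNorm Q sa) hM)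
  apply maxNorm_le
  intro x
  unfold stsqlUpdate
  split_ifs with hx
  · set L0 := Real.log (Fintype.card A) with hL0def
    set L1 := Real.log (∑ b, Real.exp (N * Q (j, b))) with hL1def
    set L2 := Real.log (∑ e, Real.exp (N * Q (k, e))) with hL2def
    have hβN : 0 ≤ β / N := div_nonneg hβ0 hN.le
    have h1 : |L1| ≤ L0 + N * M :=
      logsumexp_abs_le N M hN hM0 (fun b => Q (j, b))
        (fun b => le_trans (abs_le_maxNorm Q (j, b)) hM)
    have h2 : |L2| ≤ L0 + N * M :=
      logsumexp_abs_le N M hN hM0 (fun e => Q (k, e))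
        (fun e => le_trans (abs_le_maxNorm Q (k, e)) hM)
    have hdiv : (β / N) * (L0 + N * M) = β * (L0 / N) + β * M := by
      field_simp
    have h1' : |(β / N) * L1| ≤ β * (L0 / N) + β * M := by
      rw [abs_mul, abs_of_nonneg hβN, ← hdiv]
      exact mul_le_mul_of_nonneg_left h1 hβN
    have h2' : |(β / N) * L2| ≤ β * (L0 / N) + β * M := by
      rw [abs_mul, abs_of_nonneg hβN, ← hdiv]
      exact mul_le_mul_of_nonneg_left h2 hβN
    have hβθ : 0 ≤ β * |θ| := mul_nonneg hβ0 (abs_nonneg θ)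
    have hinner : |c' + (β / N) * L1 + β * θ * (c'' + (β / N) * L2)| ≤
        (1 + β * |θ|) * (Cmax + β * (L0 / N) + β * M) := by
      have t1 : |c' + (β / N) * L1 + β * θ * (c'' + (β / N) * L2)| ≤
          |c' + (β / N) * L1| + |β * θ * (c'' + (β / N) * L2)| := abs_add_le _ _
      have t2 : |c' + (β / N) * L1| ≤ |c'| + |(β / N) * L1| := abs_add_le _ _
      have t3 : |β * θ * (c'' + (β / N) * L2)| =
          β * |θ| * |c'' + (β / N) * L2| := by
        rw [abs_mul, abs_mul, abs_of_nonneg hβ0]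
      have t4 : |c'' + (β / N) * L2| ≤ |c''| + |(β / N) * L2| := abs_add_le _ _
      have t5 : |c''| + |(β / N) * L2| ≤ Cmax + β * (L0 / N) + β * M := by linarith
      have t6 : β * |θ| * |c'' + (β / N) * L2| ≤
          β * |θ| * (Cmax + β * (L0 / N) + β * M) :=
        mul_le_mul_of_nonneg_left (le_trans t4 t5) hβθ
      nlinarith
    have hQsa : |Q sa| ≤ M := le_trans (abs_le_maxNorm Q sa) hM
    have tri : |(1 - α) * Q sa +
        α * (c' + (β / N) * L1 + β * θ * (c'' + (β / N) * L2))| ≤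
        (1 - α) * |Q sa| +
        α * |c' + (β / N) * L1 + β * θ * (c'' + (β / N) * L2)| := by
      calc |(1 - α) * Q sa + α * (c' + (β / N) * L1 + β * θ * (c'' + (β / N) * L2))|
          ≤ |(1 - α) * Q sa| +
            |α * (c' + (β / N) * L1 + β * θ * (c'' + (β / N) * L2))| := abs_add_le _ _
        _ = (1 - α) * |Q sa| +
            α * |c' + (β / N) * L1 + β * θ * (c'' + (β / N) * L2)| := by
            rw [abs_mul, abs_mul, abs_of_nonneg hα0, abs_of_nonneg (by linarith : (0:ℝ) ≤ 1 - α)]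
    have step1 : (1 - α) * |Q sa| ≤ (1 - α) * M :=
      mul_le_mul_of_nonneg_left hQsa (by linarith)
    have step2 : α * |c' + (β / N) * L1 + β * θ * (c'' + (β / N) * L2)| ≤
        α * ((1 + β * |θ|) * (Cmax + β * (L0 / N) + β * M)) :=
      mul_le_mul_of_nonneg_left hinner hα0
    linarith
  · exact le_trans (abs_le_maxNorm Q x) (le_trans hM hMK)

/-- If `‖Q₀‖ ≤ C_max/(1−β)`, `|θₙ| ≤ 1` and `|θₙ|` is nonincreasing, then the S-TSQL
iterates satisfy, for every `n ≥ 1`,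
`‖Qₙ‖ ≤ (C_max/(1−β) + log|A|/(N(1−β)))(1 + β|θ₀|) ∏_{i=1}^{n−1} (1 + αᵢ β² |θᵢ|)`. -/
theorem stsql_iterates_bound [Fintype S] [Fintype A] [Nonempty S] [Nonempty A]
    [DecidableEq S] [DecidableEq A]
    (β Cmax : ℝ) (hβ0 : 0 ≤ β) (hβ1 : β < 1) (hC : 0 ≤ Cmax)
    (N : ℝ) (hN : 0 < N)
    (Q : ℕ → S × A → ℝ) (sa : ℕ → S × A) (j k : ℕ → S) (c' c'' α θ : ℕ → ℝ)
    (hc' : ∀ n, |c' n| ≤ Cmax) (hc'' : ∀ n, |c'' n| ≤ Cmax)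
    (hα0 : ∀ n, 0 ≤ α n) (hα1 : ∀ n, α n ≤ 1)
    (hθ1 : ∀ n, |θ n| ≤ 1) (hθmono : Antitone fun n => |θ n|)
    (hupd : ∀ n, Q (n + 1) =
      stsqlUpdate β N (Q n) (sa n) (j n) (k n) (c' n) (c'' n) (α n) (θ n))
    (hQ0 : maxNorm (Q 0) ≤ Cmax / (1 - β)) :
    ∀ n, 1 ≤ n → maxNorm (Q n) ≤
      (Cmax / (1 - β) + Real.log (Fintype.card A) / (N * (1 - β))) * (1 + β * |θ 0|) *
        ∏ i ∈ Finset.Icc 1 (n - 1), (1 + α i * β ^ 2 * |θ i|) := by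
  have h1β : (0:ℝ) < 1 - β := by linarith
  have hcard : (1:ℝ) ≤ (Fintype.card A : ℝ) := by exact_mod_cast Fintype.card_pos
  have hL0 : 0 ≤ Real.log (Fintype.card A) := Real.log_nonneg hcard
  set L0 := Real.log (Fintype.card A) with hL0def
  set M0 := Cmax / (1 - β) with hM0def
  set E := L0 / N with hEdef
  set F := L0 / (N * (1 - β)) with hFdef
  have hM0nn : 0 ≤ M0 := div_nonneg hC h1β.le
  have hEnn : 0 ≤ E := div_nonneg hL0 hN.le
  have hFnn : 0 ≤ F := div_nonneg hL0 (by positivity)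
  have hM0eq : (1 - β) * M0 = Cmax := by
    rw [hM0def]; field_simp
  have hFeq : (1 - β) * F = E := by
    rw [hFdef, hEdef]; field_simp
  have hβE : β * E ≤ F := by nlinarith
  have htnn : ∀ n, 0 ≤ |θ n| := fun n => abs_nonneg _
  have hfac : ∀ i, (1:ℝ) ≤ 1 + α i * β ^ 2 * |θ i| := by
    intro i
    have : 0 ≤ α i * β ^ 2 * |θ i| :=
      mul_nonneg (mul_nonneg (hα0 i) (sq_nonneg β)) (abs_nonneg _)
    linarith
  have hprod : ∀ m, (1:ℝ) ≤ ∏ i ∈ Finset.Icc 1 m, (1 + α i * β ^ 2 * |θ i|) := by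
    intro m
    calc (1:ℝ) = ∏ _i ∈ Finset.Icc 1 m, (1:ℝ) := by simp
      _ ≤ ∏ i ∈ Finset.Icc 1 m, (1 + α i * β ^ 2 * |θ i|) :=
        Finset.prod_le_prod (by intros; norm_num) (fun i _ => hfac i)
  intro n hn
  induction n, hn using Nat.le_induction with
  | base =>
    simp only [Nat.sub_self, show (1:ℕ) - 1 = 0 from rfl]
    rw [show Finset.Icc 1 0 = ∅ from Finset.Icc_eq_empty (by omega), Finset.prod_empty,
      mul_one]
    rw [hupd 0]
    refine stsql_step β Cmax N hβ0 hN _ _ _ _ _ _ _ _ (hc' 0) (hc'' 0) (hα0 0) (hα1 0)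
      M0 _ hQ0 ?_ ?_
    · nlinarith [htnn 0, mul_nonneg hβ0 (htnn 0)]
    · -- (1-α)M0 + α(1+β|θ0|)(Cmax + βE + βM0) ≤ (M0 + F)(1+β|θ0|)
      have hkey : Cmax + β * E + β * M0 ≤ M0 + F := by nlinarith
      have hβθ : 0 ≤ β * |θ 0| := mul_nonneg hβ0 (htnn 0)
      have h2 : (1 + β * |θ 0|) * (Cmax + β * E + β * M0) ≤ (1 + β * |θ 0|) * (M0 + F) := by
        apply mul_le_mul_of_nonneg_left hkey (by linarith)
      have h3 : M0 ≤ (M0 + F) * (1 + β * |θ 0|) := by nlinarith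
      nlinarith [hα0 0, hα1 0, mul_le_mul_of_nonneg_left h2 (hα0 0)]
  | succ n hn ih =>
    obtain ⟨m, rfl⟩ : ∃ m, n = m + 1 := ⟨n - 1, by omega⟩
    simp only [Nat.add_sub_cancel] at ih ⊢
    rw [Finset.prod_Icc_succ_top (by omega : 1 ≤ m + 1)]
    set Bn := (M0 + F) * (1 + β * |θ 0|) * ∏ i ∈ Finset.Icc 1 m, (1 + α i * β ^ 2 * |θ i|)
      with hBndef
    have hBnnn : 0 ≤ Bn := by
      apply mul_nonneg
      · apply mul_nonneg (by linarith)
        nlinarith [mul_nonneg hβ0 (htnn 0)]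
      · linarith [hprod m]
    set nn := m + 1 with hnndef
    have htle : |θ nn| ≤ |θ 0| := hθmono (Nat.zero_le nn)
    -- key inequality : (1 + β|θ nn|)(Cmax + βE) ≤ (1-β) Bn
    have hkey : (1 + β * |θ nn|) * (Cmax + β * E) ≤ (1 - β) * Bn := by
      have h1 : (1 + β * |θ nn|) * (Cmax + β * E) ≤ (1 + β * |θ 0|) * (Cmax + E) := by
        have a1 : 1 + β * |θ nn| ≤ 1 + β * |θ 0| := by nlinarith
        have a2 : Cmax + β * E ≤ Cmax + E := by nlinarith
        have a3 : 0 ≤ Cmax + β * E := by nlinarith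
        nlinarith [mul_nonneg hβ0 (htnn 0)]
      have h2 : (1 + β * |θ 0|) * (Cmax + E) = (1 - β) * ((M0 + F) * (1 + β * |θ 0|)) := by
        rw [← hM0eq, ← hFeq]; ring
      have h3 : (1 - β) * ((M0 + F) * (1 + β * |θ 0|)) ≤ (1 - β) * Bn := by
        rw [hBndef]
        have hb : 0 ≤ (M0 + F) * (1 + β * |θ 0|) := by
          apply mul_nonneg (by linarith); nlinarith [mul_nonneg hβ0 (htnn 0)]
        exact mul_le_mul_of_nonneg_left (le_mul_of_one_le_right hb (hprod m)) h1β.le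
      linarith [h1, h2 ▸ h1, h3]
    rw [hupd nn]
    refine stsql_step β Cmax N hβ0 hN _ _ _ _ _ _ _ _ (hc' nn) (hc'' nn) (hα0 nn) (hα1 nn)
      Bn _ ih ?_ ?_
    · nlinarith [hfac nn]
    · -- (1-α)Bn + α(1+β|θ|)(Cmax + βE + βBn) ≤ Bn (1 + α β² |θ|)
      have hβθ : 0 ≤ β * |θ nn| := mul_nonneg hβ0 (htnn nn)
      have hX : (1 + β * |θ nn|) * (Cmax + β * E + β * Bn) ≤ Bn * (1 + β ^ 2 * |θ nn|) := by
        have expand : (1 + β * |θ nn|) * (Cmax + β * E + β * Bn) =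
            (1 + β * |θ nn|) * (Cmax + β * E) + (β + β ^ 2 * |θ nn|) * Bn := by ring
        rw [expand]
        nlinarith
      have hα := mul_le_mul_of_nonneg_left hX (hα0 nn)
      have hEeq : Real.log (Fintype.card A) / N = E := rfl
      rw [hEeq]
      have hre : (M0 + F) * (1 + β * |θ 0|) *
          ((∏ i ∈ Finset.Icc 1 m, (1 + α i * β ^ 2 * |θ i|)) * (1 + α nn * β ^ 2 * |θ nn|))
          = Bn * (1 + α nn * β ^ 2 * |θ nn|) := by rw [hBndef]; ring
      rw [hre]
      nlinarith [hα]
end
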